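/- Let M be a simple matroid of rank k+1 (k ≥ 2) with a 2-colouring (R,B) such that every hyperplane of M contains an element of R. Let L be a line of M such that every rank-(k−1) flat of M skew to L contains an element of R. Then every hyperplane of the principal truncation of L in M contains an element of R. -/

import Mathlib

open Set
open scoped Classical

namespace MatroidPaper

variable {α : Type*}

/-- The rank of a set in a matroid: the supremum of cardinalities of independent subsets. -/
noncomputable def rkS (M : Matroid α) (X : Set α) : ℕ :=
  sSup {n | ∃ I, M.Indep I ∧ I ⊆ X ∧ I.ncard = n}

/-- The rank of a matroid. -/
noncomputable def rk (M : Matroid α) : ℕ := rkS M M.E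

/-- A hyperplane: a flat of rank `rk M - 1`. -/
def Hyp (M : Matroid α) (H : Set α) : Prop := M.IsFlat H ∧ rkS M H = rk M - 1

/-- Two sets are skew if the rank of their union is the sum of their ranks. -/
def SkewSets (M : Matroid α) (X Y : Set α) : Prop :=
  rkS M (X ∪ Y) = rkS M X + rkS M Y

/-- A simple matroid: every subset of the ground set with at most two elements is independent. -/
def SimpleM (M : Matroid α) : Prop := ∀ X ⊆ M.E, X.ncard ≤ 2 → M.Indep X

/-- A real-representable matroid. -/
def RealRep (M : Matroid α) : Prop :=
  ∃ (n : ℕ) (φ : α → (Fin n → ℝ)), ∀ I, I ⊆ M.E →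
    (M.Indep I ↔ LinearIndependent ℝ (fun x : I => φ x))

/-- A matroid is `k`-degenerate if it has rank at most one or its ground set is covered by
flats of rank at least two with `∑ (r(Fᵢ) - 1) ≤ k - 1`. -/
def Degen (M : Matroid α) (k : ℕ) : Prop :=
  rk M ≤ 1 ∨ ∃ (t : ℕ) (F : Fin t → Set α),
    (∀ i, M.IsFlat (F i) ∧ 2 ≤ rkS M (F i)) ∧
    M.E ⊆ ⋃ i, F i ∧ ∑ i, (rkS M (F i) - 1) ≤ k - 1

/-- A set `X` is `k`-degenerate in `M` if the restriction `M|X` is a `k`-degenerate matroid. -/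
def DegenSet (M : Matroid α) (X : Set α) (k : ℕ) : Prop := Degen (M.restrict X) k

/-- `N` is the (one-fold) principal truncation of `F` in `M`. -/
noncomputable def IsPT (M : Matroid α) (F : Set α) (N : Matroid α) : Prop :=
  N.E = M.E ∧ ∀ X ⊆ M.E,
    rkS N X = if F ⊆ M.closure X then rkS M X - 1 else rkS M X

/-- `N` is the complete principal truncation `M ÷ F` of `F` in `M`. -/
def IsCPT (M : Matroid α) (F : Set α) (N : Matroid α) : Prop :=
  N.E = M.E ∧ ∀ X ⊆ M.E,
    rkS N X = min (rkS M X + (rkS M F - 1)) (rkS M (X ∪ F)) - (rkS M F - 1)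

section RankAPI

variable {M : Matroid α} {I J X Y : Set α} {e : α}

lemma ncard_le_of_indep [M.Finite] (hI : M.IsBasis I X) (hJ : M.Indep J) (hJX : J ⊆ X) :
    J.ncard ≤ I.ncard := by
  obtain ⟨J', hJ', hJJ'⟩ := hJ.subset_isBasis_of_subset hJX hI.subset_ground
  have h1 : J'.encard = I.encard := hJ'.encard_eq_encard hI
  have hJ'fin : J'.Finite := M.set_finite J' hJ'.indep.subset_ground
  calc J.ncard ≤ J'.ncard := Set.ncard_le_ncard hJJ' hJ'fin
    _ = I.ncard := by rw [Set.ncard_def, h1, ← Set.ncard_def]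

lemma rkS_basis [M.Finite] (hI : M.IsBasis I X) : rkS M X = I.ncard := by
  have hne : {n | ∃ J, M.Indep J ∧ J ⊆ X ∧ J.ncard = n}.Nonempty :=
    ⟨0, ∅, M.empty_indep, empty_subset X, by simp⟩
  have hub : I.ncard ∈ upperBounds {n | ∃ J, M.Indep J ∧ J ⊆ X ∧ J.ncard = n} := by
    rintro n ⟨J, hJ, hJX, rfl⟩
    exact ncard_le_of_indep hI hJ hJX
  exact le_antisymm (csSup_le hne hub) (le_csSup ⟨_, hub⟩ ⟨I, hI.indep, hI.subset, rfl⟩)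

lemma indep_le_rkS [M.Finite] (hX : X ⊆ M.E) (hJ : M.Indep J) (hJX : J ⊆ X) :
    J.ncard ≤ rkS M X := by
  obtain ⟨I, hI⟩ := M.exists_isBasis X hX
  rw [rkS_basis hI]
  exact ncard_le_of_indep hI hJ hJX

lemma rkS_mono [M.Finite] (hXY : X ⊆ Y) (hY : Y ⊆ M.E) : rkS M X ≤ rkS M Y := by
  obtain ⟨I, hI⟩ := M.exists_isBasis X (hXY.trans hY)
  rw [rkS_basis hI]
  exact indep_le_rkS hY hI.indep (hI.subset.trans hXY)

lemma rkS_closure [M.Finite] (hX : X ⊆ M.E) : rkS M (M.closure X) = rkS M X := by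
  obtain ⟨I, hI⟩ := M.exists_isBasis X hX
  rw [rkS_basis hI, rkS_basis hI.isBasis_closure_right]

lemma rkS_insert_le [M.Finite] (hX : X ⊆ M.E) (he : e ∈ M.E) :
    rkS M (insert e X) ≤ rkS M X + 1 := by
  obtain ⟨J, hJ⟩ := M.exists_isBasis (insert e X) (insert_subset he hX)
  rw [rkS_basis hJ]
  have h1 : (J \ {e}).ncard ≤ rkS M X := by
    refine indep_le_rkS hX (hJ.indep.subset diff_subset) ?_
    intro x hx
    rcases hJ.subset hx.1 with h | h
    · exact absurd h hx.2
    · exact h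
  have hJfin : J.Finite := M.set_finite J hJ.indep.subset_ground
  have h2 : J.ncard ≤ (J \ {e}).ncard + 1 := by
    by_cases heJ : e ∈ J
    · rw [Set.ncard_diff_singleton_add_one heJ hJfin]
    · rw [Set.diff_singleton_eq_self heJ]; omega
  omega

lemma mem_closure_iff_rkS [M.Finite] (hX : X ⊆ M.E) (he : e ∈ M.E) :
    e ∈ M.closure X ↔ rkS M (insert e X) = rkS M X := by
  constructor
  · intro h
    refine le_antisymm ?_ (rkS_mono (subset_insert e X) (insert_subset he hX))
    have h1 : insert e X ⊆ M.closure X := insert_subset h (M.subset_closure X hX)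
    have := rkS_mono h1 (M.closure_subset_ground X)
    rwa [rkS_closure hX] at this
  · intro h
    by_contra hec
    obtain ⟨I, hI⟩ := M.exists_isBasis X hX
    rw [← hI.closure_eq_closure] at hec
    obtain ⟨hind, heI⟩ := (hI.indep.notMem_closure_iff he).mp hec
    have hle : (insert e I).ncard ≤ rkS M (insert e X) :=
      indep_le_rkS (insert_subset he hX) hind (insert_subset_insert hI.subset)
    have hIfin : I.Finite := M.set_finite I hI.indep.subset_ground
    rw [Set.ncard_insert_of_notMem heI hIfin] at hle
    rw [rkS_basis hI] at h
    omega

lemma closure_eq_of_rkS [M.Finite] (hXY : X ⊆ Y) (hY : Y ⊆ M.E) (hr : rkS M Y ≤ rkS M X) :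
    M.closure X = M.closure Y := by
  obtain ⟨I, hI⟩ := M.exists_isBasis X (hXY.trans hY)
  obtain ⟨J, hJ, hIJ⟩ := hI.indep.subset_isBasis_of_subset (hI.subset.trans hXY) hY
  have hJfin : J.Finite := M.set_finite J hJ.indep.subset_ground
  have hIJ' : I = J := by
    refine Set.eq_of_subset_of_ncard_le hIJ ?_ hJfin
    rw [← rkS_basis hI, ← rkS_basis hJ]; exact hr
  rw [← hI.closure_eq_closure, hIJ', hJ.closure_eq_closure]

lemma flat_of_closure_subset {F : Set α} (hF : F ⊆ M.E) (h : M.closure F ⊆ F) : M.IsFlat F := by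
  refine ⟨fun I X hIF hIX ↦ ?_, hF⟩
  refine hIX.subset_closure.trans ?_
  rw [hIF.closure_eq_closure]
  exact h

end RankAPI

/-- If every rank-`(k-1)` flat skew to `L` meets `R`, then every hyperplane of the principal
truncation of `L` meets `R`. -/
theorem stmt9 (k : ℕ) (hk : 2 ≤ k) (M : Matroid α) [M.Finite] (hs : SimpleM M)
    (hr : rk M = k + 1) (R B : Set α) (hRB : R ∪ B = M.E) (hd : Disjoint R B)
    (hhyp : ∀ H, Hyp M H → (H ∩ R).Nonempty)
    (L : Set α) (hL : M.IsFlat L) (hL2 : rkS M L = 2)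
    (hall : ∀ F, M.IsFlat F → rkS M F = k - 1 → SkewSets M F L → (F ∩ R).Nonempty)
    (N : Matroid α) (hN : IsPT M L N) :
    ∀ H, Hyp N H → (H ∩ R).Nonempty := by
  obtain ⟨hNE, hNr⟩ := hN
  haveI hNfin : N.Finite := ⟨hNE ▸ M.ground_finite⟩
  have hLE : L ⊆ M.E := hL.subset_ground
  -- rank of N is k
  have hrkN : rk N = k := by
    have h1 : rkS N M.E = rkS M M.E - 1 := by
      rw [hNr M.E Subset.rfl, if_pos (by rw [M.closure_ground]; exact hLE)]
    have h2 : rkS M M.E = k + 1 := hr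
    rw [rk, hNE, h1, h2]; omega
  intro H hH
  obtain ⟨hHflatN, hHrk⟩ := hH
  have hHE : H ⊆ M.E := hNE ▸ hHflatN.subset_ground
  have hHrk' : rkS N H = k - 1 := by rw [hHrk, hrkN]
  have hclNH : N.closure H = H := hHflatN.closure
  by_cases hLH : L ⊆ M.closure H
  · -- Case 1 : H is a hyperplane of M
    have hNH : rkS N H = rkS M H - 1 := by rw [hNr H hHE, if_pos hLH]
    have hMH : rkS M H = k := by
      have h0 : rkS M L ≤ rkS M H := by
        have := rkS_mono hLH (M.closure_subset_ground H)
        rwa [rkS_closure hHE] at this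
      rw [hL2] at h0
      omega
    have hHflatM : M.IsFlat H := by
      refine flat_of_closure_subset hHE fun e he ↦ ?_
      have heE : e ∈ M.E := M.closure_subset_ground H he
      have h1 : rkS M (insert e H) = rkS M H := (mem_closure_iff_rkS hHE heE).mp he
      have h2 : L ⊆ M.closure (insert e H) :=
        hLH.trans (M.closure_subset_closure (subset_insert e H))
      have h3 : rkS N (insert e H) = rkS N H := by
        rw [hNr (insert e H) (insert_subset heE hHE), if_pos h2, h1, hNH]
      have : e ∈ N.closure H := by
        refine (mem_closure_iff_rkS (M := N) (hNE ▸ hHE) (hNE ▸ heE)).mpr h3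
      rwa [hclNH] at this
    obtain ⟨x, hx⟩ := hhyp H ⟨hHflatM, by rw [hMH, hr]; omega⟩
    exact ⟨x, hx⟩
  · -- Case 2 : H is a rank-(k-1) flat of M skew to L
    have hNH : rkS N H = rkS M H := by rw [hNr H hHE, if_neg hLH]
    have hMH : rkS M H = k - 1 := by rw [← hNH, hHrk']
    have hHflatM : M.IsFlat H := by
      refine flat_of_closure_subset hHE fun e he ↦ ?_
      have heE : e ∈ M.E := M.closure_subset_ground H he
      have h1 : rkS M (insert e H) = rkS M H := (mem_closure_iff_rkS hHE heE).mp he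
      have hcl : M.closure (insert e H) = M.closure H := M.closure_insert_eq_of_mem_closure he
      have h3 : rkS N (insert e H) = rkS N H := by
        rw [hNr (insert e H) (insert_subset heE hHE), if_neg (hcl ▸ hLH), h1, hNH]
      have : e ∈ N.closure H := by
        refine (mem_closure_iff_rkS (M := N) (hNE ▸ hHE) (hNE ▸ heE)).mpr h3
      rwa [hclNH] at this
    -- pick e ∈ L \ closure H
    obtain ⟨e, heL, hecl⟩ : ∃ e ∈ L, e ∉ M.closure H := not_subset.mp hLH
    have heE : e ∈ M.E := hLE heL
    have heH : insert e H ⊆ M.E := insert_subset heE hHE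
    have hins : rkS M (insert e H) = rkS M H + 1 := by
      have h1 := rkS_insert_le hHE heE
      have h2 := rkS_mono (subset_insert e H) heH
      have h3 : rkS M (insert e H) ≠ rkS M H := fun h ↦
        hecl ((mem_closure_iff_rkS hHE heE).mpr h)
      omega
    have hHLE : H ∪ L ⊆ M.E := union_subset hHE hLE
    have hsub : insert e H ⊆ H ∪ L := insert_subset (Or.inr heL) subset_union_left
    have hne : rkS M (H ∪ L) ≠ rkS M (insert e H) := by
      intro heq
      have hcl : M.closure (insert e H) = M.closure (H ∪ L) :=
        closure_eq_of_rkS hsub hHLE heq.le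
      have hLsub : L ⊆ M.closure (insert e H) := by
        rw [hcl]
        exact subset_union_right.trans (M.subset_closure _ hHLE)
      have h3 : rkS N (insert e H) = rkS N H := by
        rw [hNr (insert e H) heH, if_pos hLsub, hins, hNH]; omega
      have : e ∈ N.closure H :=
        (mem_closure_iff_rkS (M := N) (hNE ▸ hHE) (hNE ▸ heE)).mpr h3
      rw [hclNH] at this
      exact hecl (M.subset_closure H hHE this)
    have hHL : rkS M (H ∪ L) = k + 1 := by
      have h1 : rkS M (H ∪ L) ≤ k + 1 := by
        have := rkS_mono hHLE Subset.rfl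
        rwa [show rkS M M.E = k + 1 from hr] at this
      have h2 := rkS_mono hsub hHLE
      omega
    have hskew : SkewSets M H L := by
      rw [SkewSets, hHL, hMH, hL2]; omega
    obtain ⟨x, hx⟩ := hall H hHflatM hMH hskew
    exact ⟨x, hx⟩

end MatroidPaper
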